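/- For every integer $k \geq 4$, $\int_4^{\infty} e^{-(k-1)\left(\frac{8}{9x} + \log\frac{9x}{10}\right)} dx \leq \frac{25}{18}\left(\frac{5}{18}\right)^{k-3} \frac{1}{k-1}$. -/

import Mathlib

open MeasureTheory Set Filter

theorem stmt18 (k : ℕ) (hk : 4 ≤ k) :
    ∫ x in Set.Ioi (4 : ℝ),
        Real.exp (-((k : ℝ) - 1) * (8 / (9 * x) + Real.log (9 * x / 10))) ≤
      25 / 18 * ((5 : ℝ) / 18) ^ (k - 3) * (1 / ((k : ℝ) - 1)) := by
  set c : ℝ := (k : ℝ) - 1 with hc_def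
  have hk' : (4:ℝ) ≤ (k:ℝ) := by exact_mod_cast hk
  have hc0 : (0:ℝ) < c := by rw [hc_def]; linarith
  set C : ℝ := (5/18 : ℝ) ^ (k - 3) with hC
  have hCpos : 0 < C := by positivity
  set g : ℝ → ℝ := fun x => C * (Real.exp (-c * (8 / (9 * x))) * (100 / (81 * x ^ 2))) with hg
  set F : ℝ → ℝ := fun x => C * (25 / (18 * c)) * Real.exp (-c * (8 / (9 * x))) with hF
  have hfun : (fun x : ℝ => -c * (8 / (9 * x))) = fun x : ℝ => (-(8*c)/9) * x⁻¹ := by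
    funext x
    simp [div_eq_mul_inv, mul_inv]
    ring
  have hderiv : ∀ x ∈ Ioi (4:ℝ), HasDerivAt F (g x) x := by
    intro x hx
    have hx4 : (4:ℝ) < x := hx
    have hx0 : x ≠ 0 := by positivity
    have h1 : HasDerivAt (fun x : ℝ => (-(8*c)/9) * x⁻¹) ((-(8*c)/9) * (-(x^2)⁻¹)) x :=
      (hasDerivAt_inv hx0).const_mul _
    rw [← hfun] at h1
    have h2 := (h1.exp).const_mul (C * (25 / (18 * c)))
    refine h2.congr_deriv ?_
    simp only [hg]
    field_simp
    ring
  have hgnonneg : ∀ x ∈ Ioi (4:ℝ), 0 ≤ g x := by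
    intro x hx
    have hx4 : (4:ℝ) < x := hx
    have : (0:ℝ) < x := by linarith
    simp only [hg]
    positivity
  have htend : Tendsto F atTop (nhds (C * (25 / (18*c)))) := by
    have h0 : Tendsto (fun x : ℝ => -c * (8 / (9 * x))) atTop (nhds 0) := by
      rw [hfun]
      have := tendsto_inv_atTop_zero.const_mul (-(8*c)/9)
      simpa using this
    have h1 : Tendsto (fun x : ℝ => Real.exp (-c * (8 / (9 * x)))) atTop (nhds 1) := by
      have := (Real.continuous_exp.tendsto 0).comp h0
      simpa [Function.comp_def] using this
    exact (mul_one (C * (25 / (18 * c)))) ▸ h1.const_mul (C * (25 / (18 * c)))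
  have hcont : ContinuousOn F (Ici (4:ℝ)) := by
    apply ContinuousOn.mul continuousOn_const
    apply Real.continuous_exp.comp_continuousOn
    rw [hfun]
    apply ContinuousOn.mul continuousOn_const
    apply ContinuousOn.inv₀ continuousOn_id
    intro x hx
    simp only [id_eq]
    exact ne_of_gt (lt_of_lt_of_le (by norm_num) hx)
  have hint : ∫ x in Ioi (4:ℝ), g x = C * (25/(18*c)) - F 4 :=
    integral_Ioi_of_hasDerivAt_of_nonneg (hcont 4 Set.self_mem_Ici) hderiv hgnonneg htend
  have hgint : IntegrableOn g (Ioi (4:ℝ)) :=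
    integrableOn_Ioi_deriv_of_nonneg (hcont 4 Set.self_mem_Ici) hderiv hgnonneg htend
  have key : ∀ x ∈ Ioi (4:ℝ),
      Real.exp (-c * (8/(9*x) + Real.log (9*x/10))) ≤ g x := by
    intro x hx
    have hx4 : (4:ℝ) < x := hx
    have hxpos : (0:ℝ) < x := by linarith
    have ht : (0:ℝ) < 9*x/10 := by linarith
    have hck : c = ((k-1 : ℕ) : ℝ) := by
      rw [hc_def, Nat.cast_sub (by omega)]; norm_num
    have e1 : Real.exp (-c * (8/(9*x) + Real.log (9*x/10)))
        = Real.exp (-c * (8/(9*x))) * (10/(9*x)) ^ (k-1) := by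
      rw [mul_add, Real.exp_add]
      congr 1
      rw [show -c * Real.log (9*x/10) = Real.log (9*x/10) * (-c) by ring,
        ← Real.rpow_def_of_pos ht, hck, Real.rpow_neg ht.le, Real.rpow_natCast,
        ← inv_pow, inv_div]
    have e2 : (10/(9*x)) ^ (k-1) = (10/(9*x))^(k-3) * (100/(81*x^2)) := by
      have h2 : ((10:ℝ)/(9*x))^2 = 100/(81*x^2) := by
        rw [div_pow, mul_pow]; norm_num
      rw [show k - 1 = (k-3) + 2 by omega, pow_add, h2]
    have hle : (10/(9*x))^(k-3) ≤ C := by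
      rw [hC]
      apply pow_le_pow_left₀ (by positivity)
      rw [div_le_div_iff₀ (by linarith) (by norm_num)]
      linarith
    have h3 : Real.exp (-c*(8/(9*x))) * ((10/(9*x))^(k-3) * (100/(81*x^2)))
        ≤ Real.exp (-c*(8/(9*x))) * (C * (100/(81*x^2))) :=
      mul_le_mul_of_nonneg_left
        (mul_le_mul_of_nonneg_right hle (by positivity)) (Real.exp_nonneg _)
    calc Real.exp (-c * (8/(9*x) + Real.log (9*x/10)))
        = Real.exp (-c*(8/(9*x))) * ((10/(9*x))^(k-3) * (100/(81*x^2))) := by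
          rw [e1, e2]
      _ ≤ Real.exp (-c*(8/(9*x))) * (C * (100/(81*x^2))) := h3
      _ = g x := by simp only [hg]; ring
  have hfmeas : Measurable (fun x : ℝ => Real.exp (-c * (8/(9*x) + Real.log (9*x/10)))) := by
    apply Real.measurable_exp.comp
    apply Measurable.const_mul
    apply Measurable.add
    · exact (measurable_const.div (measurable_const.mul measurable_id))
    · exact Real.measurable_log.comp ((measurable_const.mul measurable_id).div measurable_const)
  have hfint : IntegrableOn (fun x : ℝ => Real.exp (-c * (8/(9*x) + Real.log (9*x/10))))
      (Ioi (4:ℝ)) := by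
    apply Integrable.mono' hgint (hfmeas.aestronglyMeasurable.restrict)
    rw [ae_restrict_iff' measurableSet_Ioi]
    exact ae_of_all _ fun x hx => by
      rw [Real.norm_eq_abs, abs_of_nonneg (Real.exp_nonneg _)]
      exact key x hx
  have hmono : ∫ x in Ioi (4:ℝ), Real.exp (-c * (8/(9*x) + Real.log (9*x/10)))
      ≤ ∫ x in Ioi (4:ℝ), g x :=
    setIntegral_mono_on hfint hgint measurableSet_Ioi key
  have hF4 : 0 ≤ F 4 := by
    simp only [hF]
    positivity
  have heq : C * (25/(18*c)) = 25 / 18 * C * (1 / c) := by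
    field_simp
  calc ∫ x in Ioi (4:ℝ), Real.exp (-c * (8 / (9 * x) + Real.log (9 * x / 10)))
      ≤ ∫ x in Ioi (4:ℝ), g x := hmono
    _ = C * (25/(18*c)) - F 4 := hint
    _ ≤ C * (25/(18*c)) := by linarith
    _ = 25 / 18 * C * (1 / c) := heq
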